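/- Let C be a category, let F : Cᵒᵖ ⥤ Cat be a functor (a strict presheaf of categories, so that pullback functors f* := F(f) satisfy (g ∘ f)* = f* ∘ g* and (id)* = id on the nose), and let X be a simplicial object in C. Define the category of full descent data on X: objects are families (E_k)_{k≥0} with E_k an object of F(X_k), together with isomorphisms X(θ)*(E_k) ≅ E_m in F(X_m) for every morphism θ : [k] → [m] of the simplex category Δ (where X(θ) : X_m → X_k is the corresponding structure map), compatible with composition in Δ and equal to the identity for identity maps; morphisms are families of morphisms E_k → E'_k commuting with these isomorphisms. Then the restriction functor, sending a full descent datum to the pair (E₀, φ) consisting of E₀ and the induced isomorphism φ : ∂₀*E₀ ≅ ∂₁*E₀ over X₁, is an equivalence of categories onto the category of descent data on the 2-truncation of X, i.e. pairs (E, φ) with E an object of F(X₀) and φ : ∂₀*E ≅ ∂₁*E an isomorphism in F(X₁) satisfying the cocycle condition over X₂. -/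

import Mathlib

open CategoryTheory Simplicial Opposite

namespace Stmt5

variable {C : Type*} [Category C] (F : Cᵒᵖ ⥤ Cat) (X : CategoryTheory.SimplicialObject C)

/-- By strict functoriality, pulling back along `f` and then `g` agrees with pulling back
along the composite `f ≫ g`, as an equality of objects. -/
lemma pb_comp_obj {a b c : C} (f : a ⟶ b) (g : b ⟶ c) (E : F.obj (op c)) :
    (F.map f.op).toFunctor.obj ((F.map g.op).toFunctor.obj E) = (F.map (f ≫ g).op).toFunctor.obj E := by
  rw [op_comp, F.map_comp]; rfl

lemma pb_id_obj {a : C} (E : F.obj (op a)) : (F.map (𝟙 a).op).toFunctor.obj E = E := by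
  rw [op_id, F.map_id]; rfl

/-- Pullback along the structure map of an identity of the simplex category is the
identity, on objects. -/
lemma pbX_id_obj (k : SimplexCategory) (o : F.obj (op (X.obj (op k)))) :
    (F.map (X.map (𝟙 k).op).op).toFunctor.obj o = o := by
  rw [op_id, X.map_id, pb_id_obj]

/-- Pullback along the structure map of a composite in the simplex category agrees,
on objects, with the composite of the pullbacks. -/
lemma pbX_comp_obj {k m l : SimplexCategory} (θ : k ⟶ m) (θ' : m ⟶ l)
    (o : F.obj (op (X.obj (op k)))) :
    (F.map (X.map (θ ≫ θ').op).op).toFunctor.obj o =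
      (F.map (X.map θ'.op).op).toFunctor.obj ((F.map (X.map θ.op).op).toFunctor.obj o) := by
  rw [op_comp, X.map_comp, ← pb_comp_obj]

end Stmt5

namespace Stmt5

/-- A full descent datum on the simplicial object `X` relative to the strict presheaf of
categories `F`:  a family of objects `E_k` of `F(X_k)`, together with isomorphisms
`X(θ)*(E_k) ≅ E_m` for every `θ : [k] ⟶ [m]` in the simplex category, compatible with
composition and identities (the pullbacks along equal composites being identified via
`eqToHom`, coming from the strict functoriality equalities). -/
structure FullDescentDatum {C : Type*} [Category C] (F : Cᵒᵖ ⥤ Cat)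
    (X : CategoryTheory.SimplicialObject C) where
  obj : ∀ k : SimplexCategory, F.obj (op (X.obj (op k)))
  iso : ∀ {k m : SimplexCategory} (θ : k ⟶ m),
    (F.map (X.map θ.op).op).toFunctor.obj (obj k) ≅ obj m
  iso_id : ∀ k : SimplexCategory, (iso (𝟙 k)).hom = eqToHom (pbX_id_obj F X k (obj k))
  iso_comp : ∀ {k m l : SimplexCategory} (θ : k ⟶ m) (θ' : m ⟶ l),
    (iso (θ ≫ θ')).hom =
      eqToHom (pbX_comp_obj F X θ θ' (obj k)) ≫
        (F.map (X.map θ'.op).op).toFunctor.map (iso θ).hom ≫ (iso θ').hom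

variable {C : Type*} [Category C] (F : Cᵒᵖ ⥤ Cat) (X : CategoryTheory.SimplicialObject C)

/-- A morphism of full descent data: a family of morphisms `E_k ⟶ E'_k` commuting with
the descent isomorphisms. -/
structure FullHom (A B : FullDescentDatum F X) where
  app : ∀ k : SimplexCategory, A.obj k ⟶ B.obj k
  compat : ∀ {k m : SimplexCategory} (θ : k ⟶ m),
    (F.map (X.map θ.op).op).toFunctor.map (app k) ≫ (B.iso θ).hom = (A.iso θ).hom ≫ app m

theorem FullHom.ext' {A B : FullDescentDatum F X} (f g : FullHom F X A B)
    (h : f.app = g.app) : f = g := by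
  cases f; cases g; cases h; rfl

instance : Category (FullDescentDatum F X) where
  Hom A B := FullHom F X A B
  id A :=
    { app := fun k => 𝟙 (A.obj k)
      compat := fun θ => by simp }
  comp {A B D} f g :=
    { app := fun k => f.app k ≫ g.app k
      compat := fun θ => by
        rw [Functor.map_comp, Category.assoc, g.compat, ← Category.assoc, f.compat,
          Category.assoc] }
  id_comp f := FullHom.ext' F X _ _ (funext fun k => Category.id_comp _)
  comp_id f := FullHom.ext' F X _ _ (funext fun k => Category.comp_id _)
  assoc f g h := FullHom.ext' F X _ _ (funext fun k => Category.assoc _ _ _)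

/-- Simplicial identities for the low-dimensional face maps, on objects after pullback;
these provide the canonical identifications used in the cocycle condition. -/
lemma face₁ : X.δ (1 : Fin 3) ≫ X.δ (0 : Fin 2) = X.δ (0 : Fin 3) ≫ X.δ (0 : Fin 2) := by
  simpa using CategoryTheory.SimplicialObject.δ_comp_δ (X := X)
    (i := (0 : Fin 2)) (j := (0 : Fin 2)) le_rfl

lemma face₂ : X.δ (0 : Fin 3) ≫ X.δ (1 : Fin 2) = X.δ (2 : Fin 3) ≫ X.δ (0 : Fin 2) := by
  simpa using (CategoryTheory.SimplicialObject.δ_comp_δ (X := X)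
    (i := (0 : Fin 2)) (j := (1 : Fin 2)) (by decide)).symm

lemma face₃ : X.δ (2 : Fin 3) ≫ X.δ (1 : Fin 2) = X.δ (1 : Fin 3) ≫ X.δ (1 : Fin 2) := by
  simpa using CategoryTheory.SimplicialObject.δ_comp_δ (X := X)
    (i := (1 : Fin 2)) (j := (1 : Fin 2)) le_rfl

variable (E : F.obj (op (X _⦋0⦌)))

lemma eqA : (F.map (X.δ (1 : Fin 3)).op).toFunctor.obj ((F.map (X.δ (0 : Fin 2)).op).toFunctor.obj E) =
    (F.map (X.δ (0 : Fin 3)).op).toFunctor.obj ((F.map (X.δ (0 : Fin 2)).op).toFunctor.obj E) := by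
  rw [pb_comp_obj, pb_comp_obj, face₁]

lemma eqB : (F.map (X.δ (0 : Fin 3)).op).toFunctor.obj ((F.map (X.δ (1 : Fin 2)).op).toFunctor.obj E) =
    (F.map (X.δ (2 : Fin 3)).op).toFunctor.obj ((F.map (X.δ (0 : Fin 2)).op).toFunctor.obj E) := by
  rw [pb_comp_obj, pb_comp_obj, face₂]

lemma eqC : (F.map (X.δ (2 : Fin 3)).op).toFunctor.obj ((F.map (X.δ (1 : Fin 2)).op).toFunctor.obj E) =
    (F.map (X.δ (1 : Fin 3)).op).toFunctor.obj ((F.map (X.δ (1 : Fin 2)).op).toFunctor.obj E) := by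
  rw [pb_comp_obj, pb_comp_obj, face₃]

end Stmt5

namespace Stmt5

/-- A descent datum on the 2-truncation of the simplicial object `X` relative to the
strict presheaf of categories `F`: an object `E` of `F(X₀)` together with an isomorphism
`φ : ∂₀*E ≅ ∂₁*E` in `F(X₁)` satisfying the cocycle condition over `X₂`, the pullbacks
along equal composites of face maps being identified via `eqToHom`. -/
structure DescentDatum {C : Type*} [Category C] (F : Cᵒᵖ ⥤ Cat)
    (X : CategoryTheory.SimplicialObject C) where
  E : F.obj (op (X _⦋0⦌))
  φ : (F.map (X.δ (0 : Fin 2)).op).toFunctor.obj E ≅ (F.map (X.δ (1 : Fin 2)).op).toFunctor.obj E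
  cocycle : (F.map (X.δ (1 : Fin 3)).op).toFunctor.map φ.hom =
    eqToHom (eqA F X E) ≫ (F.map (X.δ (0 : Fin 3)).op).toFunctor.map φ.hom ≫
      eqToHom (eqB F X E) ≫ (F.map (X.δ (2 : Fin 3)).op).toFunctor.map φ.hom ≫
      eqToHom (eqC F X E)

variable {C : Type*} [Category C] (F : Cᵒᵖ ⥤ Cat) (X : CategoryTheory.SimplicialObject C)

/-- A morphism of truncated descent data: a morphism `E ⟶ E'` commuting with `φ`. -/
structure DescHom (P Q : DescentDatum F X) where
  g : P.E ⟶ Q.E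
  compat : (F.map (X.δ (0 : Fin 2)).op).toFunctor.map g ≫ Q.φ.hom =
    P.φ.hom ≫ (F.map (X.δ (1 : Fin 2)).op).toFunctor.map g

theorem DescHom.ext' {P Q : DescentDatum F X} (f g : DescHom F X P Q)
    (h : f.g = g.g) : f = g := by
  cases f; cases g; cases h; rfl

instance : Category (DescentDatum F X) where
  Hom P Q := DescHom F X P Q
  id P :=
    { g := 𝟙 P.E
      compat := by simp }
  comp {P Q R} f g :=
    { g := f.g ≫ g.g
      compat := by
        rw [Functor.map_comp, Category.assoc, g.compat, ← Category.assoc, f.compat,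
          Category.assoc, ← Functor.map_comp] }
  id_comp f := DescHom.ext' F X _ _ (Category.id_comp _)
  comp_id f := DescHom.ext' F X _ _ (Category.comp_id _)
  assoc f g h := DescHom.ext' F X _ _ (Category.assoc _ _ _)



/-! ### Auxiliary machinery -/

section SimplexLemmas
open SimplexCategory

/-- The edge `⦋1⦌ ⟶ m` from vertex `i` to vertex `j`. -/
def edg {m : SimplexCategory} (i j : Fin (m.len+1)) (h : i ≤ j) : (⦋1⦌ : SimplexCategory) ⟶ m :=
  SimplexCategory.Hom.mk ⟨fun x => if (x : ℕ) = 0 then i else j, by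
    intro x y hxy
    by_cases hx : (x : ℕ) = 0
    · by_cases hy : (y : ℕ) = 0 <;> simp [hx, hy, h]
    · have hy : (y : ℕ) ≠ 0 := by
        intro h0; exact hx (Nat.le_zero.mp (h0 ▸ (Fin.le_def.mp hxy)))
      simp [hx, hy]⟩

/-- The triangle `⦋2⦌ ⟶ m` with vertices `i ≤ j ≤ k`. -/
def tri {m : SimplexCategory} (i j k : Fin (m.len+1)) (h1 : i ≤ j) (h2 : j ≤ k) :
    (⦋2⦌ : SimplexCategory) ⟶ m :=
  SimplexCategory.Hom.mk ⟨fun x => if (x : ℕ) = 0 then i else if (x : ℕ) = 1 then j else k, by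
    intro x y hxy
    have hxy' := Fin.le_def.mp hxy
    by_cases hx : (x : ℕ) = 0
    · by_cases hy : (y : ℕ) = 0
      · simp [hx, hy]
      · by_cases hy1 : (y : ℕ) = 1 <;> simp [hx, hy, hy1, h1, h1.trans h2]
    · by_cases hx1 : (x : ℕ) = 1
      · have hy : (y : ℕ) ≠ 0 := by omega
        by_cases hy1 : (y : ℕ) = 1 <;> simp [hx, hx1, hy, hy1, h2]
      · have hy : (y : ℕ) ≠ 0 := by omega
        have hy1 : (y : ℕ) ≠ 1 := by omega
        simp [hx, hx1, hy, hy1]⟩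

lemma δ0_edg {m : SimplexCategory} (i j : Fin (m.len+1)) (h : i ≤ j) :
    SimplexCategory.δ (0 : Fin 2) ≫ edg i j h = SimplexCategory.const ⦋0⦌ m j :=
  SimplexCategory.eq_const_of_zero _

lemma δ1_edg {m : SimplexCategory} (i j : Fin (m.len+1)) (h : i ≤ j) :
    SimplexCategory.δ (1 : Fin 2) ≫ edg i j h = SimplexCategory.const ⦋0⦌ m i :=
  SimplexCategory.eq_const_of_zero _

lemma edg_comp {m l : SimplexCategory} (i j : Fin (m.len+1)) (h : i ≤ j) (θ : m ⟶ l) :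
    edg i j h ≫ θ = edg (θ.toOrderHom i) (θ.toOrderHom j) (θ.toOrderHom.monotone h) := by
  ext x : 3
  dsimp [edg]
  by_cases hx : x = 0 <;> simp [hx]

lemma δ0_tri {m : SimplexCategory} (i j k : Fin (m.len+1)) (h1 : i ≤ j) (h2 : j ≤ k) :
    SimplexCategory.δ (0 : Fin 3) ≫ tri i j k h1 h2 = edg j k h2 := by
  apply SimplexCategory.Hom.ext_one_left <;> rfl

lemma δ1_tri {m : SimplexCategory} (i j k : Fin (m.len+1)) (h1 : i ≤ j) (h2 : j ≤ k) :
    SimplexCategory.δ (1 : Fin 3) ≫ tri i j k h1 h2 = edg i k (h1.trans h2) := by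
  apply SimplexCategory.Hom.ext_one_left <;> rfl

lemma δ2_tri {m : SimplexCategory} (i j k : Fin (m.len+1)) (h1 : i ≤ j) (h2 : j ≤ k) :
    SimplexCategory.δ (2 : Fin 3) ≫ tri i j k h1 h2 = edg i j h1 := by
  apply SimplexCategory.Hom.ext_one_left <;> rfl

lemma edg_degenerate {m : SimplexCategory} (i : Fin (m.len+1)) :
    edg i i le_rfl = SimplexCategory.σ (0 : Fin 1) ≫ SimplexCategory.const ⦋0⦌ m i := by
  ext x : 3
  dsimp [edg]
  exact ite_self i

lemma hom_to_zero_unique {x : SimplexCategory} (f g : x ⟶ ⦋0⦌) : f = g :=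
  (SimplexCategory.eq_const_to_zero f).trans (SimplexCategory.eq_const_to_zero g).symm

lemma hom_zero_zero (f : (⦋0⦌ : SimplexCategory) ⟶ ⦋0⦌) : f = 𝟙 (⦋0⦌ : SimplexCategory) :=
  hom_to_zero_unique f (𝟙 (⦋0⦌ : SimplexCategory))

lemma hom_one_zero (f : (⦋1⦌ : SimplexCategory) ⟶ ⦋0⦌) : f = SimplexCategory.σ (0 : Fin 1) :=
  hom_to_zero_unique f _

lemma edg_zero_one :
    edg (0 : Fin (⦋1⦌.len+1)) 1 (by decide) = 𝟙 (⦋1⦌ : SimplexCategory) := by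
  apply SimplexCategory.Hom.ext_one_left <;> rfl

end SimplexLemmas

section PullbackLemmas

variable {C : Type*} [Category C] (F : Cᵒᵖ ⥤ Cat) (X : CategoryTheory.SimplicialObject C)

lemma pbX_comp_eq {k m l : SimplexCategory} (θ : k ⟶ m) (θ' : m ⟶ l) :
    (F.map (X.map (θ ≫ θ').op).op).toFunctor = (F.map (X.map θ.op).op).toFunctor ⋙ (F.map (X.map θ'.op).op).toFunctor := by
  rw [op_comp, X.map_comp, op_comp, F.map_comp]; rfl

lemma pbX_id_eq (k : SimplexCategory) :
    (F.map (X.map (𝟙 k).op).op).toFunctor = 𝟭 (F.obj (op (X.obj (op k)))) := by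
  rw [op_id, X.map_id, op_id, F.map_id]; rfl

/-- Workhorse: pullback of a pullback of a morphism, with the composite rewritten. -/
lemma pbX_pull {k m l : SimplexCategory} (θ : k ⟶ m) (θ' : m ⟶ l) (ρ : k ⟶ l)
    (w : θ ≫ θ' = ρ) {A B : F.obj (op (X.obj (op k)))} (u : A ⟶ B) :
    (F.map (X.map θ'.op).op).toFunctor.map ((F.map (X.map θ.op).op).toFunctor.map u) =
      eqToHom (by rw [← w, pbX_comp_obj]) ≫
        (F.map (X.map ρ.op).op).toFunctor.map u ≫ eqToHom (by rw [← w, pbX_comp_obj]) := by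
  subst w
  have := Functor.congr_hom (pbX_comp_eq F X θ θ') u
  simp only [Functor.comp_map] at this
  rw [this]; simp

/-- The reverse direction. -/
lemma pbX_unpull {k m l : SimplexCategory} (θ : k ⟶ m) (θ' : m ⟶ l) (ρ : k ⟶ l)
    (w : θ ≫ θ' = ρ) {A B : F.obj (op (X.obj (op k)))} (u : A ⟶ B) :
    (F.map (X.map ρ.op).op).toFunctor.map u =
      eqToHom (by rw [← w, pbX_comp_obj]) ≫
        (F.map (X.map θ'.op).op).toFunctor.map ((F.map (X.map θ.op).op).toFunctor.map u) ≫
          eqToHom (by rw [← w, pbX_comp_obj]) := by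
  rw [pbX_pull F X θ θ' ρ w u]; simp

lemma pbX_id_map {k : SimplexCategory} {A B : F.obj (op (X.obj (op k)))} (u : A ⟶ B) :
    (F.map (X.map (𝟙 k).op).op).toFunctor.map u =
      eqToHom (Functor.congr_obj (pbX_id_eq F X k) A) ≫ u ≫
        eqToHom (Functor.congr_obj (pbX_id_eq F X k) B).symm :=
  Functor.congr_hom (pbX_id_eq F X k) u

end PullbackLemmas

section Psi

variable {C : Type*} [Category C] {F : Cᵒᵖ ⥤ Cat} {X : CategoryTheory.SimplicialObject C}

lemma δ_def {n : ℕ} (i : Fin (n + 2)) :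
    X.δ i = X.map (SimplexCategory.δ i).op := rfl

lemma ψ_src (P : DescentDatum F X) {m : SimplexCategory} (i j : Fin (m.len+1)) (h : i ≤ j) :
    (F.map (X.map (SimplexCategory.const ⦋0⦌ m j).op).op).toFunctor.obj P.E =
      (F.map (X.map (edg i j h).op).op).toFunctor.obj ((F.map (X.δ (0 : Fin 2)).op).toFunctor.obj P.E) := by
  rw [δ_def, ← δ0_edg i j h, pbX_comp_obj]

lemma ψ_tgt (P : DescentDatum F X) {m : SimplexCategory} (i j : Fin (m.len+1)) (h : i ≤ j) :
    (F.map (X.map (edg i j h).op).op).toFunctor.obj ((F.map (X.δ (1 : Fin 2)).op).toFunctor.obj P.E) =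
      (F.map (X.map (SimplexCategory.const ⦋0⦌ m i).op).op).toFunctor.obj P.E := by
  rw [δ_def, ← δ1_edg i j h, pbX_comp_obj]

/-- The transition isomorphism between the pullbacks of `P.E` along two vertices,
obtained by pulling back `P.φ` along the edge joining them. -/
def ψ (P : DescentDatum F X) {m : SimplexCategory} {i j : Fin (m.len+1)} (h : i ≤ j) :
    (F.map (X.map (SimplexCategory.const ⦋0⦌ m j).op).op).toFunctor.obj P.E ≅
      (F.map (X.map (SimplexCategory.const ⦋0⦌ m i).op).op).toFunctor.obj P.E :=
  eqToIso (ψ_src P i j h) ≪≫ (F.map (X.map (edg i j h).op).op).toFunctor.mapIso P.φ ≪≫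
    eqToIso (ψ_tgt P i j h)

lemma ψ_congr (P : DescentDatum F X) {m : SimplexCategory} {i j i' j' : Fin (m.len+1)}
    (h : i ≤ j) (h' : i' ≤ j') (hi : i = i') (hj : j = j') :
    (ψ P h).hom = eqToHom (by rw [hj]) ≫ (ψ P h').hom ≫ eqToHom (by rw [hi]) := by
  subst hi; subst hj; simp

end Psi

section PullDelta

variable {C : Type*} [Category C] (F : Cᵒᵖ ⥤ Cat) (X : CategoryTheory.SimplicialObject C)

/-- `pbX_pull` with the inner pullback written along the face map `X.δ i`. -/
lemma pbX_pullδ {n : ℕ} {l : SimplexCategory} (i : Fin (n + 2)) (θ' : ⦋n + 1⦌ ⟶ l)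
    (ρ : ⦋n⦌ ⟶ l) (w : SimplexCategory.δ i ≫ θ' = ρ) {A B : F.obj (op (X _⦋n⦌))} (u : A ⟶ B) :
    (F.map (X.map θ'.op).op).toFunctor.map ((F.map (X.δ i).op).toFunctor.map u) =
      eqToHom (by rw [← w, δ_def, pbX_comp_obj]) ≫
        (F.map (X.map ρ.op).op).toFunctor.map u ≫ eqToHom (by rw [← w, δ_def, pbX_comp_obj]) :=
  pbX_pull F X _ θ' ρ w u

end PullDelta

section Unit

variable {C : Type*} [Category C] {F : Cᵒᵖ ⥤ Cat} {X : CategoryTheory.SimplicialObject C}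

lemma σδ_obj (P : DescentDatum F X) (a : Fin 2) :
    (F.map (X.map (SimplexCategory.σ (0 : Fin 1)).op).op).toFunctor.obj
      ((F.map (X.δ a).op).toFunctor.obj P.E) = P.E := by
  rw [δ_def, ← pbX_comp_obj, hom_zero_zero (SimplexCategory.δ a ≫ SimplexCategory.σ 0)]
  exact Functor.congr_obj (pbX_id_eq F X ⦋0⦌) P.E

/-- Unitality: the pullback of `φ` along the degeneracy is the identity. -/
lemma σ_pull_φ (P : DescentDatum F X) :
    (F.map (X.map (SimplexCategory.σ (0 : Fin 1)).op).op).toFunctor.map P.φ.hom =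
      eqToHom ((σδ_obj P 0).trans (σδ_obj P 1).symm) := by
  have hc := congrArg (F.map (X.map (SimplexCategory.const ⦋2⦌ ⦋0⦌ 0).op).op).toFunctor.map P.cocycle
  simp only [Functor.map_comp, eqToHom_map] at hc
  rw [pbX_pullδ F X _ _ _ (hom_one_zero (SimplexCategory.δ (1 : Fin 3) ≫ _)) P.φ.hom,
    pbX_pullδ F X _ _ _ (hom_one_zero (SimplexCategory.δ (0 : Fin 3) ≫ _)) P.φ.hom,
    pbX_pullδ F X _ _ _ (hom_one_zero (SimplexCategory.δ (2 : Fin 3) ≫ _)) P.φ.hom] at hc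
  have hiso : IsIso ((F.map (X.map (SimplexCategory.σ (0 : Fin 1)).op).op).toFunctor.map P.φ.hom) :=
    inferInstance
  set u := (F.map (X.map (SimplexCategory.σ (0 : Fin 1)).op).op).toFunctor.map P.φ.hom with hu
  set w : P.E ⟶ P.E := eqToHom (σδ_obj P 0).symm ≫ u ≫ eqToHom (σδ_obj P 1) with hwdef
  have hu2 : u = eqToHom (σδ_obj P 0) ≫ w ≫ eqToHom (σδ_obj P 1).symm := by
    simp [hwdef]
  rw [hu2] at hc
  simp only [Category.assoc, eqToHom_trans, eqToHom_trans_assoc, eqToHom_refl,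
    Category.comp_id, Category.id_comp, eqToHom_comp_iff, comp_eqToHom_iff] at hc
  have hisow : IsIso w := by rw [hwdef]; infer_instance
  have hW : w = 𝟙 P.E := (cancel_epi w).mp (by rw [← hc, Category.comp_id])
  rw [hu2, hW]
  simp

end Unit

section PsiLemmas

variable {C : Type*} [Category C] {F : Cᵒᵖ ⥤ Cat} {X : CategoryTheory.SimplicialObject C}

lemma ψ_refl (P : DescentDatum F X) {m : SimplexCategory} (i : Fin (m.len+1)) :
    (ψ P (le_refl i)).hom = 𝟙 _ := by
  simp only [ψ, Iso.trans_hom, eqToIso.hom, Functor.mapIso_hom]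
  rw [pbX_unpull F X _ _ _ (edg_degenerate i).symm P.φ.hom, σ_pull_φ]
  simp [eqToHom_map]

lemma ψ_refl' (P : DescentDatum F X) {m : SimplexCategory} {i j : Fin (m.len+1)}
    (h : i ≤ j) (hij : i = j) : (ψ P h).hom = eqToHom (by rw [hij]) := by
  subst hij
  rw [ψ_refl]
  simp

lemma ψ_tri (P : DescentDatum F X) {m : SimplexCategory} {i j k : Fin (m.len+1)}
    (h1 : i ≤ j) (h2 : j ≤ k) :
    (ψ P h2).hom ≫ (ψ P h1).hom = (ψ P (h1.trans h2)).hom := by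
  have hc := congrArg (F.map (X.map (tri i j k h1 h2).op).op).toFunctor.map P.cocycle
  simp only [Functor.map_comp, eqToHom_map] at hc
  rw [pbX_pullδ F X _ _ _ (δ1_tri i j k h1 h2) P.φ.hom,
    pbX_pullδ F X _ _ _ (δ0_tri i j k h1 h2) P.φ.hom,
    pbX_pullδ F X _ _ _ (δ2_tri i j k h1 h2) P.φ.hom] at hc
  simp only [ψ, Iso.trans_hom, eqToIso.hom, Functor.mapIso_hom, Category.assoc]
  rw [eqToHom_comp_iff, comp_eqToHom_iff] at hc
  rw [hc]
  simp [eqToHom_trans, eqToHom_trans_assoc]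

lemma ψ_map (P : DescentDatum F X) {m l : SimplexCategory} {i j : Fin (m.len+1)}
    (h : i ≤ j) (θ' : m ⟶ l) :
    (F.map (X.map θ'.op).op).toFunctor.map (ψ P h).hom =
      eqToHom (by rw [← pbX_comp_obj, SimplexCategory.const_comp]) ≫
        (ψ P (θ'.toOrderHom.monotone h)).hom ≫
          eqToHom (by rw [← pbX_comp_obj, SimplexCategory.const_comp]) := by
  simp only [ψ, Iso.trans_hom, eqToIso.hom, Functor.mapIso_hom, Functor.map_comp, eqToHom_map]
  rw [pbX_pull F X _ θ' _ (edg_comp i j h θ') P.φ.hom]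
  simp [eqToHom_trans, eqToHom_trans_assoc]

end PsiLemmas

section LobjSec

variable {C : Type*} [Category C] {F : Cᵒᵖ ⥤ Cat} {X : CategoryTheory.SimplicialObject C}

/-- The full descent datum built from a truncated descent datum, by pulling back along
vertex maps and gluing with the transition isomorphisms `ψ`. -/
def Lobj (P : DescentDatum F X) : FullDescentDatum F X where
  obj k := (F.map (X.map (SimplexCategory.const ⦋0⦌ k 0).op).op).toFunctor.obj P.E
  iso {k m} θ :=
    eqToIso (by rw [← pbX_comp_obj, SimplexCategory.const_comp]) ≪≫
      ψ (i := 0) (j := θ.toOrderHom 0) P (Fin.zero_le _)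
  iso_id k := by
    simp only [Iso.trans_hom, eqToIso.hom]
    erw [ψ_refl' P (Fin.zero_le _) rfl, Category.comp_id]
    rfl
  iso_comp {k m l} θ θ' := by
    simp only [Iso.trans_hom, eqToIso.hom, Functor.map_comp, eqToHom_map, Category.assoc]
    rw [ψ_map P (Fin.zero_le _) θ']
    rw [ψ_congr P (Fin.zero_le ((θ ≫ θ').toOrderHom 0))
      ((Fin.zero_le _).trans (θ'.toOrderHom.monotone (Fin.zero_le (θ.toOrderHom 0)))) rfl rfl,
      ← ψ_tri P (Fin.zero_le (θ'.toOrderHom 0))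
        (θ'.toOrderHom.monotone (Fin.zero_le (θ.toOrderHom 0)))]
    simp [eqToHom_trans, eqToHom_trans_assoc]
    erw [eqToHom_trans_assoc]

end LobjSec

section RSec

variable {C : Type*} [Category C] {F : Cᵒᵖ ⥤ Cat} {X : CategoryTheory.SimplicialObject C}

lemma iso_congr (A : FullDescentDatum F X) {k m : SimplexCategory} {θ θ' : k ⟶ m}
    (w : θ = θ') : (A.iso θ).hom = eqToHom (by rw [w]) ≫ (A.iso θ').hom := by
  subst w; simp

lemma iso_congr_inv (A : FullDescentDatum F X) {k m : SimplexCategory} {θ θ' : k ⟶ m}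
    (w : θ = θ') : (A.iso θ).inv = (A.iso θ').inv ≫ eqToHom (by rw [w]) := by
  subst w; simp

lemma iso_pull (A : FullDescentDatum F X) {k m l : SimplexCategory} (θ : k ⟶ m) (θ' : m ⟶ l) :
    (F.map (X.map θ'.op).op).toFunctor.map (A.iso θ).hom =
      eqToHom (pbX_comp_obj F X θ θ' (A.obj k)).symm ≫ (A.iso (θ ≫ θ')).hom ≫
        (A.iso θ').inv := by
  rw [A.iso_comp θ θ']; simp

lemma iso_pull_inv (A : FullDescentDatum F X) {k m l : SimplexCategory} (θ : k ⟶ m)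
    (θ' : m ⟶ l) :
    (F.map (X.map θ'.op).op).toFunctor.map (A.iso θ).inv =
      (A.iso θ').hom ≫ (A.iso (θ ≫ θ')).inv ≫ eqToHom (pbX_comp_obj F X θ θ' (A.obj k)) := by
  have h : ((F.map (X.map θ'.op).op).toFunctor.mapIso (A.iso θ)) =
      eqToIso (pbX_comp_obj F X θ θ' (A.obj k)).symm ≪≫ A.iso (θ ≫ θ') ≪≫
        (A.iso θ').symm := by
    apply Iso.ext
    simpa using iso_pull A θ θ'
  have h2 := congrArg Iso.inv h
  simpa using h2

open SimplexCategory in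
lemma d00 : SimplexCategory.δ (0 : Fin 2) ≫ SimplexCategory.δ (0 : Fin 3)
    = SimplexCategory.const ⦋0⦌ ⦋2⦌ 2 := SimplexCategory.eq_const_of_zero _
open SimplexCategory in
lemma d10 : SimplexCategory.δ (1 : Fin 2) ≫ SimplexCategory.δ (0 : Fin 3)
    = SimplexCategory.const ⦋0⦌ ⦋2⦌ 1 := SimplexCategory.eq_const_of_zero _
open SimplexCategory in
lemma d01 : SimplexCategory.δ (0 : Fin 2) ≫ SimplexCategory.δ (1 : Fin 3)
    = SimplexCategory.const ⦋0⦌ ⦋2⦌ 2 := SimplexCategory.eq_const_of_zero _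
open SimplexCategory in
lemma d11 : SimplexCategory.δ (1 : Fin 2) ≫ SimplexCategory.δ (1 : Fin 3)
    = SimplexCategory.const ⦋0⦌ ⦋2⦌ 0 := SimplexCategory.eq_const_of_zero _
open SimplexCategory in
lemma d02 : SimplexCategory.δ (0 : Fin 2) ≫ SimplexCategory.δ (2 : Fin 3)
    = SimplexCategory.const ⦋0⦌ ⦋2⦌ 1 := SimplexCategory.eq_const_of_zero _
open SimplexCategory in
lemma d12 : SimplexCategory.δ (1 : Fin 2) ≫ SimplexCategory.δ (2 : Fin 3)
    = SimplexCategory.const ⦋0⦌ ⦋2⦌ 0 := SimplexCategory.eq_const_of_zero _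

/-- The restriction functor. -/
@[reducible] def Rfun (F : Cᵒᵖ ⥤ Cat) (X : CategoryTheory.SimplicialObject C) :
    FullDescentDatum F X ⥤ DescentDatum F X where
  obj A :=
    { E := A.obj (SimplexCategory.mk 0)
      φ := A.iso (SimplexCategory.δ (0 : Fin 2)) ≪≫ (A.iso (SimplexCategory.δ (1 : Fin 2))).symm
      cocycle := by
        simp only [δ_def, Iso.trans_hom, Iso.symm_hom, Functor.map_comp]
        rw [iso_pull A (SimplexCategory.δ (0 : Fin 2)) (SimplexCategory.δ (1 : Fin 3)),
          iso_pull_inv A (SimplexCategory.δ (1 : Fin 2)) (SimplexCategory.δ (1 : Fin 3)),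
          iso_pull A (SimplexCategory.δ (0 : Fin 2)) (SimplexCategory.δ (0 : Fin 3)),
          iso_pull_inv A (SimplexCategory.δ (1 : Fin 2)) (SimplexCategory.δ (0 : Fin 3)),
          iso_pull A (SimplexCategory.δ (0 : Fin 2)) (SimplexCategory.δ (2 : Fin 3)),
          iso_pull_inv A (SimplexCategory.δ (1 : Fin 2)) (SimplexCategory.δ (2 : Fin 3)),
          iso_congr A d00, iso_congr_inv A d10, iso_congr A d01, iso_congr_inv A d11,
          iso_congr A d02, iso_congr_inv A d12]
        simp [eqToHom_trans, eqToHom_trans_assoc]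
        erw [eqToHom_trans_assoc, eqToHom_trans_assoc, eqToHom_trans_assoc, eqToHom_trans]
        simp }
  map {A B} f :=
    { g := f.app (SimplexCategory.mk 0)
      compat := by
        simp only [δ_def, Iso.trans_hom, Iso.symm_hom]
        have h1 := f.compat (SimplexCategory.δ (0 : Fin 2))
        have h2 := f.compat (SimplexCategory.δ (1 : Fin 2))
        have happ : f.app (SimplexCategory.mk (0 + 1)) =
            (A.iso (SimplexCategory.δ (1 : Fin 2))).inv ≫
              (F.map (X.map (SimplexCategory.δ (1 : Fin 2)).op).op).toFunctor.map
                (f.app (SimplexCategory.mk 0)) ≫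
              (B.iso (SimplexCategory.δ (1 : Fin 2))).hom := by
          rw [h2]; simp
        rw [← Category.assoc, h1, Category.assoc, happ]
        simp }
  map_id A := DescHom.ext' F X _ _ rfl
  map_comp f g := DescHom.ext' F X _ _ rfl

end RSec

section FullSec
variable {C : Type*} [Category C] {F : Cᵒᵖ ⥤ Cat} {X : CategoryTheory.SimplicialObject C}

lemma vertex_indep (A B : FullDescentDatum F X) (g : (Rfun F X).obj A ⟶ (Rfun F X).obj B)
    {m : SimplexCategory} (i : Fin (m.len+1)) :
    (A.iso (SimplexCategory.const ⦋0⦌ m i)).inv ≫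
      (F.map (X.map (SimplexCategory.const ⦋0⦌ m i).op).op).toFunctor.map g.g ≫
        (B.iso (SimplexCategory.const ⦋0⦌ m i)).hom =
    (A.iso (SimplexCategory.const ⦋0⦌ m 0)).inv ≫
      (F.map (X.map (SimplexCategory.const ⦋0⦌ m 0).op).op).toFunctor.map g.g ≫
        (B.iso (SimplexCategory.const ⦋0⦌ m 0)).hom := by
  have hc := congrArg (F.map (X.map (edg 0 i (Fin.zero_le i)).op).op).toFunctor.map g.compat
  simp only [Rfun, δ_def, Functor.map_comp, Iso.trans_hom, Iso.symm_hom] at hc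
  rw [pbX_pull F X _ _ _ (δ0_edg 0 i (Fin.zero_le i)) g.g,
    pbX_pull F X _ _ _ (δ1_edg 0 i (Fin.zero_le i)) g.g,
    iso_pull A _ (edg 0 i (Fin.zero_le i)), iso_pull_inv A _ (edg 0 i (Fin.zero_le i)),
    iso_pull B _ (edg 0 i (Fin.zero_le i)), iso_pull_inv B _ (edg 0 i (Fin.zero_le i)),
    iso_congr A (δ0_edg 0 i (Fin.zero_le i)), iso_congr_inv A (δ1_edg 0 i (Fin.zero_le i)),
    iso_congr B (δ0_edg 0 i (Fin.zero_le i)), iso_congr_inv B (δ1_edg 0 i (Fin.zero_le i))]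
    at hc
  simp only [Category.assoc, Iso.hom_inv_id_assoc, eqToHom_trans_assoc, eqToHom_refl,
    Category.id_comp] at hc
  erw [Iso.inv_hom_id_assoc, Iso.inv_hom_id_assoc] at hc
  simp only [Iso.inv_hom_id_assoc, eqToHom_trans, eqToHom_trans_assoc] at hc
  simp only [eqToHom_comp_iff, comp_eqToHom_iff, Category.assoc] at hc
  simp only [eqToHom_trans, eqToHom_trans_assoc, eqToHom_refl, Category.comp_id,
    Category.id_comp] at hc
  have E : (F.map (X.map (SimplexCategory.const ⦋0⦌ m 0).op).op).toFunctor.obj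
        (B.obj (SimplexCategory.mk 0)) =
      (F.map (X.map (edg 0 i (Fin.zero_le i)).op).op).toFunctor.obj
        ((F.map (X.δ (1 : Fin 2)).op).toFunctor.obj (B.obj (SimplexCategory.mk 0))) := by
    rw [δ_def, ← δ1_edg 0 i (Fin.zero_le i), pbX_comp_obj]
  simp only [← Category.assoc] at hc
  have hc2 := (cancel_mono _).1 hc
  have hc3 := congrArg
    (fun z => z ≫ (B.iso (SimplexCategory.const ⦋0⦌ m 0)).hom) hc2
  simp only [Category.assoc, Iso.inv_hom_id, Category.comp_id] at hc3
  rw [Iso.inv_comp_eq]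
  exact hc3

end FullSec

section Final
variable {C : Type*} [Category C] {F : Cᵒᵖ ⥤ Cat} {X : CategoryTheory.SimplicialObject C}

lemma pbX_congr {k m : SimplexCategory} {θ θ' : k ⟶ m} (w : θ = θ')
    {A B : F.obj (op (X.obj (op k)))} (u : A ⟶ B) :
    (F.map (X.map θ.op).op).toFunctor.map u =
      eqToHom (by rw [w]) ≫ (F.map (X.map θ'.op).op).toFunctor.map u ≫ eqToHom (by rw [w]) := by
  subst w; simp

lemma iso_id_inv (A : FullDescentDatum F X) (k : SimplexCategory) :
    (A.iso (𝟙 k)).inv = eqToHom (pbX_id_obj F X k (A.obj k)).symm := by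
  have h : A.iso (𝟙 k) = eqToIso (pbX_id_obj F X k (A.obj k)) := Iso.ext (A.iso_id k)
  rw [h]; rfl

lemma app_eq {A B : FullDescentDatum F X} (u : FullHom F X A B) (k : SimplexCategory) :
    u.app k = (A.iso (SimplexCategory.const ⦋0⦌ k 0)).inv ≫
      (F.map (X.map (SimplexCategory.const ⦋0⦌ k 0).op).op).toFunctor.map
        (u.app (SimplexCategory.mk 0)) ≫
      (B.iso (SimplexCategory.const ⦋0⦌ k 0)).hom := by
  rw [u.compat (SimplexCategory.const ⦋0⦌ k 0)]
  simp

instance : (Rfun F X).Faithful where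
  map_injective {A B} f g h := by
    apply FullHom.ext'
    funext k
    have h0 : f.app (SimplexCategory.mk 0) = g.app (SimplexCategory.mk 0) :=
      congrArg DescHom.g h
    rw [app_eq f k, app_eq g k, h0]

lemma fullhom_compat (A B : FullDescentDatum F X) (g : (Rfun F X).obj A ⟶ (Rfun F X).obj B)
    {k m : SimplexCategory} (θ : k ⟶ m) :
    (F.map (X.map θ.op).op).toFunctor.map ((A.iso (SimplexCategory.const ⦋0⦌ k 0)).inv ≫
        (F.map (X.map (SimplexCategory.const ⦋0⦌ k 0).op).op).toFunctor.map g.g ≫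
        (B.iso (SimplexCategory.const ⦋0⦌ k 0)).hom) ≫
      (B.iso θ).hom =
    (A.iso θ).hom ≫ ((A.iso (SimplexCategory.const ⦋0⦌ m 0)).inv ≫
        (F.map (X.map (SimplexCategory.const ⦋0⦌ m 0).op).op).toFunctor.map g.g ≫
        (B.iso (SimplexCategory.const ⦋0⦌ m 0)).hom) := by
  rw [Functor.map_comp, Functor.map_comp, iso_pull_inv A _ θ, iso_pull B _ θ,
    pbX_pull F X _ θ _ (SimplexCategory.const_comp ⦋0⦌ θ 0) g.g,
    iso_congr_inv A (SimplexCategory.const_comp ⦋0⦌ θ 0),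
    iso_congr B (SimplexCategory.const_comp ⦋0⦌ θ 0)]
  simp only [Category.assoc, eqToHom_trans_assoc, eqToHom_refl, Category.id_comp,
    Iso.inv_hom_id, Category.comp_id]
  rw [vertex_indep A B g (θ.toOrderHom 0)]

instance : (Rfun F X).Full where
  map_surjective {A B} g := by
    refine ⟨FullHom.mk
      (fun k => (A.iso (SimplexCategory.const ⦋0⦌ k 0)).inv ≫
        (F.map (X.map (SimplexCategory.const ⦋0⦌ k 0).op).op).toFunctor.map g.g ≫
        (B.iso (SimplexCategory.const ⦋0⦌ k 0)).hom)
      (fun {k m} θ => fullhom_compat A B g θ), ?_⟩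
    apply DescHom.ext'
    show (A.iso (SimplexCategory.const ⦋0⦌ (SimplexCategory.mk 0) 0)).inv ≫ _ ≫ _ = g.g
    rw [iso_congr_inv A SimplexCategory.const_eq_id, iso_congr B SimplexCategory.const_eq_id,
      pbX_congr SimplexCategory.const_eq_id g.g, iso_id_inv A, B.iso_id, pbX_id_map F X g.g]
    simp

end Final

section EssSurjSec
variable {C : Type*} [Category C] {F : Cᵒᵖ ⥤ Cat} {X : CategoryTheory.SimplicialObject C}

lemma δ0_eq_const : SimplexCategory.δ (0 : Fin 2) = SimplexCategory.const ⦋0⦌ ⦋1⦌ 1 :=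
  SimplexCategory.eq_const_of_zero _
lemma δ1_eq_const : SimplexCategory.δ (1 : Fin 2) = SimplexCategory.const ⦋0⦌ ⦋1⦌ 0 :=
  SimplexCategory.eq_const_of_zero _

lemma ψ_refl_iso (P : DescentDatum F X) {m : SimplexCategory} {i j : Fin (m.len+1)}
    (h : i ≤ j) (hij : i = j) : ψ P h = eqToIso (by rw [hij]) :=
  Iso.ext (ψ_refl' P h hij)

lemma ψ_zero_one (P : DescentDatum F X) (h : (0 : Fin (SimplexCategory.len ⦋1⦌ + 1)) ≤ 1) :
    (ψ P h).hom =
      eqToHom (by rw [δ_def, δ0_eq_const]) ≫ P.φ.hom ≫ eqToHom (by rw [δ_def, δ1_eq_const]) := by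
  simp only [ψ, Iso.trans_hom, eqToIso.hom, Functor.mapIso_hom]
  rw [pbX_congr edg_zero_one P.φ.hom, pbX_id_map F X P.φ.hom]
  simp

lemma RL_E (P : DescentDatum F X) : ((Rfun F X).obj (Lobj P)).E = P.E := by
  show (F.map (X.map (SimplexCategory.const ⦋0⦌ (SimplexCategory.mk 0) 0).op).op).toFunctor.obj P.E = P.E
  rw [SimplexCategory.const_eq_id]
  exact Functor.congr_obj (pbX_id_eq F X (SimplexCategory.mk 0)) P.E

lemma ψ_congr_inv (P : DescentDatum F X) {m : SimplexCategory} {i j i' j' : Fin (m.len+1)}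
    (h : i ≤ j) (h' : i' ≤ j') (hi : i = i') (hj : j = j') :
    (ψ P h).inv = eqToHom (by rw [hi]) ≫ (ψ P h').inv ≫ eqToHom (by rw [hj]) := by
  subst hi; subst hj; simp

lemma RL_phi (P : DescentDatum F X) :
    ((Rfun F X).obj (Lobj P)).φ.hom =
      eqToHom (show (F.map (X.δ (0 : Fin 2)).op).toFunctor.obj (((Rfun F X).obj (Lobj P)).E) =
          (F.map (X.δ (0 : Fin 2)).op).toFunctor.obj P.E by rw [RL_E]) ≫
        P.φ.hom ≫
      eqToHom (show (F.map (X.δ (1 : Fin 2)).op).toFunctor.obj P.E =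
          (F.map (X.δ (1 : Fin 2)).op).toFunctor.obj (((Rfun F X).obj (Lobj P)).E) by rw [RL_E]) := by
  show ((Lobj P).iso (SimplexCategory.δ (0 : Fin 2)) ≪≫
      ((Lobj P).iso (SimplexCategory.δ (1 : Fin 2))).symm).hom = _
  simp only [Lobj, Iso.trans_hom, Iso.symm_hom, Iso.trans_inv, eqToIso.inv, eqToIso.hom]
  rw [ψ_congr P (Fin.zero_le ((SimplexCategory.δ (0 : Fin 2)).toOrderHom 0))
      (show (0 : Fin (SimplexCategory.len ⦋1⦌ + 1)) ≤ 1 by decide) rfl rfl,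
    ψ_congr_inv P (Fin.zero_le ((SimplexCategory.δ (1 : Fin 2)).toOrderHom 0))
      (le_refl (0 : Fin (SimplexCategory.len ⦋1⦌ + 1))) rfl rfl,
    ψ_zero_one P, ψ_refl_iso P (le_refl (0 : Fin (SimplexCategory.len ⦋1⦌ + 1))) rfl]
  simp [eqToHom_trans]
  rfl

instance : (Rfun F X).EssSurj where
  mem_essImage P := by
    refine ⟨Lobj P, ⟨?_⟩⟩
    refine { hom := DescHom.mk (eqToHom (RL_E P)) ?_,
             inv := DescHom.mk (eqToHom (RL_E P).symm) ?_,
             hom_inv_id := ?_, inv_hom_id := ?_ }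
    · rw [RL_phi P]
      simp [eqToHom_map]
    · rw [RL_phi P]
      simp [eqToHom_map]
    · exact DescHom.ext' F X _ _ (by
        show eqToHom (RL_E P) ≫ eqToHom (RL_E P).symm = 𝟙 _
        simp)
    · exact DescHom.ext' F X _ _ (by
        show eqToHom (RL_E P).symm ≫ eqToHom (RL_E P) = 𝟙 _
        simp)

end EssSurjSec

/-- The restriction functor, sending a full descent datum `(E_k, iso)` on `X` to the
truncated descent datum `(E₀, φ)` with `φ : ∂₀*E₀ ≅ ∂₁*E₀` induced by the isomorphisms
along the two face maps `⦋0⦌ ⟶ ⦋1⦌`, is an equivalence between the category of full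
descent data on `X` and the category of descent data on the 2-truncation of `X`. -/
theorem stmt_5 :
    ∃ R : FullDescentDatum F X ⥤ DescentDatum F X,
      (∀ A : FullDescentDatum F X, (R.obj A).E = A.obj (SimplexCategory.mk 0)) ∧
      (∀ A : FullDescentDatum F X,
        HEq (R.obj A).φ
          (A.iso (SimplexCategory.δ (0 : Fin 2)) ≪≫
            (A.iso (SimplexCategory.δ (1 : Fin 2))).symm)) ∧
      (∀ (A B : FullDescentDatum F X) (f : A ⟶ B),
        HEq (DescHom.g (R.map f)) (FullHom.app f (SimplexCategory.mk 0))) ∧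
      R.IsEquivalence := by
  refine ⟨Rfun F X, fun A => rfl, fun A => HEq.rfl, fun A B f => HEq.rfl, ?_⟩
  exact { full := inferInstance, faithful := inferInstance, essSurj := inferInstance }

end Stmt5
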